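/- Let w ∈ ℝ^n with w_1 ≥ ... ≥ w_n ≥ 0 and w̃_i = −w_{n+1−i}. A vector y ∈ ℝ^n belongs to the permutahedron P(w̃) if and only if ⟨y, z⟩ ≤ −g_w(z) for all z ∈ ℝ^n. (Equivalently, the Fenchel conjugate of h = −g_w is the indicator function of P(w̃).) -/

import Mathlib

/-- The nondecreasing rearrangement `x^↑` of a vector `x ∈ ℝ^n`. -/
noncomputable def sortedAsc {n : ℕ} (x : Fin n → ℝ) : Fin n → ℝ := x ∘ Tuple.sort x

/-- The generalized Gini welfare function `g_w(x) = Σ_i w_i x^↑_i`. -/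
noncomputable def ggf {n : ℕ} (w x : Fin n → ℝ) : ℝ := ∑ i, w i * sortedAsc x i

/-- The permutahedron induced by `v`: the convex hull of all permutations of `v`. -/
noncomputable def permutahedron {n : ℕ} (v : Fin n → ℝ) : Set (Fin n → ℝ) :=
  convexHull ℝ {y | ∃ σ : Equiv.Perm (Fin n), y = v ∘ σ}

/-- The reversed negated weight vector `w̃`, with `w̃_i = −w_{n+1−i}`. -/
noncomputable def tildeW {n : ℕ} (w : Fin n → ℝ) : Fin n → ℝ := fun i => -w i.rev

open Finset in
/-- The canonical pairing of `w̃` with the nonincreasing rearrangement of `z`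
equals `-g_w(z)`. -/
lemma sum_tildeW_rev_sorted {n : ℕ} (w z : Fin n → ℝ) :
    ∑ j, tildeW w j * sortedAsc z j.rev = -(ggf w z) := by
  rw [ggf, ← Finset.sum_neg_distrib]
  rw [← Equiv.sum_comp (Fin.revPerm : Equiv.Perm (Fin n))
    (fun j => tildeW w j * sortedAsc z j.rev)]
  refine Finset.sum_congr rfl fun i _ => ?_
  simp [tildeW, Fin.rev_rev]

lemma antitone_tildeW {n : ℕ} {w : Fin n → ℝ} (hw : Antitone w) :
    Antitone (tildeW w) := fun i j h => by
  simpa [tildeW] using hw (Fin.rev_le_rev.mpr h)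

open Finset in
/-- Any permutation of `w̃` pairs with `z` at most `-g_w(z)`. -/
lemma vertex_pairing_le {n : ℕ} {w : Fin n → ℝ} (hw : Antitone w)
    (z : Fin n → ℝ) (σ : Equiv.Perm (Fin n)) :
    ∑ i, tildeW w (σ i) * z i ≤ -(ggf w z) := by
  set ρ : Equiv.Perm (Fin n) := (Tuple.sort z).symm.trans Fin.revPerm with hρ
  set g : Fin n → ℝ := fun j => sortedAsc z j.rev with hg
  have hz : ∀ i, z i = g (ρ i) := by
    intro i
    simp [hg, hρ, sortedAsc, Fin.rev_rev]
  have hmono : Monovary (tildeW w) g := by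
    refine Antitone.monovary (antitone_tildeW hw) ?_
    exact (Tuple.monotone_sort z).comp_antitone (fun a b h => Fin.rev_le_rev.mpr h)
  calc ∑ i, tildeW w (σ i) * z i
      = ∑ i, tildeW w (σ i) * g (ρ i) := by
        refine Finset.sum_congr rfl fun i _ => by rw [hz i]
    _ = ∑ j, tildeW w ((ρ.symm.trans σ) j) * g j := by
        rw [← Equiv.sum_comp ρ.symm (fun i => tildeW w (σ i) * g (ρ i))]
        refine Finset.sum_congr rfl fun j _ => by simp
    _ ≤ ∑ j, tildeW w j * g j :=
        hmono.sum_comp_perm_mul_le_sum_mul (σ := ρ.symm.trans σ)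
    _ = -(ggf w z) := sum_tildeW_rev_sorted w z

open Finset in
/-- The canonical permutation achieves equality. -/
lemma vertex_pairing_eq {n : ℕ} (w z : Fin n → ℝ) :
    ∑ i, tildeW w (((Tuple.sort z).symm.trans Fin.revPerm) i) * z i = -(ggf w z) := by
  set ρ : Equiv.Perm (Fin n) := (Tuple.sort z).symm.trans Fin.revPerm with hρ
  set g : Fin n → ℝ := fun j => sortedAsc z j.rev with hg
  have hz : ∀ i, z i = g (ρ i) := by
    intro i
    simp [hg, hρ, sortedAsc, Fin.rev_rev]
  calc ∑ i, tildeW w (ρ i) * z i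
      = ∑ i, tildeW w (ρ i) * g (ρ i) := by
        refine Finset.sum_congr rfl fun i _ => by rw [hz i]
    _ = ∑ j, tildeW w j * g j := Equiv.sum_comp ρ (fun j => tildeW w j * g j)
    _ = -(ggf w z) := sum_tildeW_rev_sorted w z

/-- For `w_1 ≥ ... ≥ w_n ≥ 0`: `y ∈ P(w̃)` iff `⟨y, z⟩ ≤ −g_w(z)` for all `z`
(the Fenchel conjugate of `−g_w` is the indicator of `P(w̃)`). -/
theorem mem_permutahedron_iff {n : ℕ} (w : Fin n → ℝ) (hw : Antitone w)
    (hw0 : ∀ i, 0 ≤ w i) (y : Fin n → ℝ) :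
    y ∈ permutahedron (tildeW w) ↔ ∀ z : Fin n → ℝ, ∑ i, y i * z i ≤ -(ggf w z) := by
  constructor
  · intro hy
    set C : Set (Fin n → ℝ) := {y | ∀ z : Fin n → ℝ, ∑ i, y i * z i ≤ -(ggf w z)} with hC
    have hCconv : Convex ℝ C := by
      intro y1 h1 y2 h2 a b ha hb hab
      intro z
      have e1 : ∑ i, (a • y1 + b • y2) i * z i
          = a * (∑ i, y1 i * z i) + b * (∑ i, y2 i * z i) := by
        rw [Finset.mul_sum, Finset.mul_sum, ← Finset.sum_add_distrib]
        refine Finset.sum_congr rfl fun i _ => by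
          simp [Pi.add_apply, Pi.smul_apply, smul_eq_mul]; ring
      rw [e1]
      have := add_le_add (mul_le_mul_of_nonneg_left (h1 z) ha)
        (mul_le_mul_of_nonneg_left (h2 z) hb)
      calc a * (∑ i, y1 i * z i) + b * (∑ i, y2 i * z i)
          ≤ a * (-(ggf w z)) + b * (-(ggf w z)) := this
        _ = -(ggf w z) := by rw [← add_mul, hab]; ring
    have hsub : {y | ∃ σ : Equiv.Perm (Fin n), y = tildeW w ∘ σ} ⊆ C := by
      rintro _ ⟨σ, rfl⟩ z
      exact vertex_pairing_le hw z σ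
    exact convexHull_min hsub hCconv hy
  · intro h
    by_contra hy
    have hfin : ({y | ∃ σ : Equiv.Perm (Fin n), y = tildeW w ∘ σ} :
        Set (Fin n → ℝ)).Finite := by
      have : ({y | ∃ σ : Equiv.Perm (Fin n), y = tildeW w ∘ σ} : Set (Fin n → ℝ))
          = Set.range (fun σ : Equiv.Perm (Fin n) => tildeW w ∘ σ) := by
        ext x; simp [Set.range, eq_comm]
      rw [this]
      exact Set.finite_range _
    obtain ⟨f, u, hfu, huy⟩ := geometric_hahn_banach_closed_point
      (convex_convexHull ℝ _) (hfin.isClosed_convexHull ℝ) hy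
    set z : Fin n → ℝ := fun i => f (fun j => if i = j then (1 : ℝ) else 0) with hzdef
    have hfval : ∀ a : Fin n → ℝ, f a = ∑ i, a i * z i := by
      intro a
      conv_lhs => rw [pi_eq_sum_univ a]
      rw [map_sum]
      refine Finset.sum_congr rfl fun i _ => ?_
      rw [map_smul]
      simp [hzdef, smul_eq_mul]
    set ρ : Equiv.Perm (Fin n) := (Tuple.sort z).symm.trans Fin.revPerm with hρ
    have hvert : (tildeW w ∘ ρ) ∈ permutahedron (tildeW w) :=
      subset_convexHull ℝ _ ⟨ρ, rfl⟩
    have h1 : f (tildeW w ∘ ρ) < u := hfu _ hvert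
    have h2 : u < f y := huy
    have h3 : f y ≤ -(ggf w z) := by rw [hfval y]; exact h z
    have h4 : f (tildeW w ∘ ρ) = -(ggf w z) := by
      rw [hfval (tildeW w ∘ ρ)]
      exact vertex_pairing_eq w z
    linarith
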